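/- In the dihedral group D₆ = ⟨ρ, σ | ρ⁶ = σ² = 1, ρσ = σρ⁵⟩ of order 12, the elements g₁ = ρ³, g₂ = ρσ, g₃ = ρ⁵σ, g₄ = ρ satisfy g₁g₂g₃g₄ = 1 and generate D₆; the elements ℓ₁ = ℓ₂ = σ, h₁ = h₂ = ρ satisfy ℓ₁ℓ₂[h₁,h₂] = 1 and generate D₆; and the union of all D₆-conjugates of ⟨g₁⟩ ∪ ⟨g₂⟩ ∪ ⟨g₃⟩ ∪ ⟨g₄⟩ meets the union of all D₆-conjugates of ⟨ℓ₁⟩ ∪ ⟨ℓ₂⟩ only in the identity. -/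

import Mathlib

open scoped commutatorElement

open DihedralGroup

lemma mem_closure_sr_r (x : DihedralGroup 6) :
    x ∈ Subgroup.closure ({sr 0, r 1} : Set (DihedralGroup 6)) := by
  have hr : (r 1 : DihedralGroup 6) ∈ Subgroup.closure ({sr 0, r 1} : Set (DihedralGroup 6)) :=
    Subgroup.subset_closure (by simp)
  have hs : (sr 0 : DihedralGroup 6) ∈ Subgroup.closure ({sr 0, r 1} : Set (DihedralGroup 6)) :=
    Subgroup.subset_closure (by simp)
  have hri : ∀ i : ZMod 6, (r i : DihedralGroup 6) ∈ Subgroup.closure ({sr 0, r 1} : Set (DihedralGroup 6)) := by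
    intro i
    have : (r 1 : DihedralGroup 6) ^ (i.val) = r i := by
      rw [r_one_pow]; simp [ZMod.natCast_val, ZMod.cast_id]
    rw [← this]; exact pow_mem hr _
  cases x with
  | r i => exact hri i
  | sr i =>
      have : (sr 0 : DihedralGroup 6) * r i = sr i := by rw [sr_mul_r, zero_add]
      rw [← this]; exact mul_mem hs (hri i)

lemma pow_fin (a x : DihedralGroup 6) (h : x ∈ Subgroup.zpowers a) :
    ∃ n : Fin 12, a ^ (n : ℕ) = x := by
  rw [← mem_powers_iff_mem_zpowers] at h
  obtain ⟨n, hn⟩ := h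
  refine ⟨⟨n % 12, Nat.mod_lt _ (by norm_num)⟩, ?_⟩
  have h12 : a ^ (12 : ℕ) = 1 := by
    have := pow_card_eq_one (x := a)
    rwa [DihedralGroup.card] at this
  calc a ^ (n % 12) = a ^ n := (pow_eq_pow_mod n h12).symm
    _ = x := hn

lemma pow_fin2 (a x : DihedralGroup 6) (h2 : a ^ (2:ℕ) = 1) (h : x ∈ Subgroup.zpowers a) :
    ∃ n : Fin 2, a ^ (n : ℕ) = x := by
  rw [← mem_powers_iff_mem_zpowers] at h
  obtain ⟨n, hn⟩ := h
  exact ⟨⟨n % 2, Nat.mod_lt _ (by norm_num)⟩, by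
    calc a ^ (n % 2) = a ^ n := (pow_eq_pow_mod n h2).symm
      _ = x := hn⟩

lemma key1 : ∀ (k k' : DihedralGroup 6) (n : Fin 12) (m : Fin 2),
    (k' * sr 0 * k'⁻¹) ^ (m : ℕ) = (k * (r 1 ^ 3) * k⁻¹) ^ (n : ℕ) →
    (k * (r 1 ^ 3) * k⁻¹) ^ (n : ℕ) = 1 := by decide

lemma key2 : ∀ (k k' : DihedralGroup 6) (n : Fin 12) (m : Fin 2),
    (k' * sr 0 * k'⁻¹) ^ (m : ℕ) = (k * (r 1 * sr 0) * k⁻¹) ^ (n : ℕ) →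
    (k * (r 1 * sr 0) * k⁻¹) ^ (n : ℕ) = 1 := by decide

lemma key3 : ∀ (k k' : DihedralGroup 6) (n : Fin 12) (m : Fin 2),
    (k' * sr 0 * k'⁻¹) ^ (m : ℕ) = (k * (r 1 ^ 5 * sr 0) * k⁻¹) ^ (n : ℕ) →
    (k * (r 1 ^ 5 * sr 0) * k⁻¹) ^ (n : ℕ) = 1 := by decide

lemma key4 : ∀ (k k' : DihedralGroup 6) (n : Fin 12) (m : Fin 2),
    (k' * sr 0 * k'⁻¹) ^ (m : ℕ) = (k * r 1 * k⁻¹) ^ (n : ℕ) →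
    (k * r 1 * k⁻¹) ^ (n : ℕ) = 1 := by decide

/-- Building data for the example `G = D₆` (dihedral of order 12),
`g(C) = 7`, `g(F) = 3`: with `ρ` the rotation of order 6 and `σ` a
reflection, `g₁ = ρ³`, `g₂ = ρσ`, `g₃ = ρ⁵σ`, `g₄ = ρ` satisfy
`g₁g₂g₃g₄ = 1` and generate `D₆`; `ℓ₁ = ℓ₂ = σ`, `h₁ = h₂ = ρ` satisfy
`ℓ₁ℓ₂⁅h₁,h₂⁆ = 1` and generate `D₆`; and the union of all conjugates of the
`⟨gᵢ⟩` meets the union of all conjugates of `⟨σ⟩` only in the identity. -/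
theorem stmt_18 :
    let ρ : DihedralGroup 6 := DihedralGroup.r 1
    let σ : DihedralGroup 6 := DihedralGroup.sr 0
    let g₁ := ρ ^ 3
    let g₂ := ρ * σ
    let g₃ := ρ ^ 5 * σ
    let g₄ := ρ
    g₁ * g₂ * g₃ * g₄ = 1 ∧
    Subgroup.closure ({g₁, g₂, g₃, g₄} : Set (DihedralGroup 6)) = ⊤ ∧
    σ * σ * ⁅ρ, ρ⁆ = 1 ∧
    Subgroup.closure ({σ, ρ} : Set (DihedralGroup 6)) = ⊤ ∧
    ∀ x : DihedralGroup 6,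
      (∃ (k g : DihedralGroup 6), g ∈ ({g₁, g₂, g₃, g₄} : Set (DihedralGroup 6)) ∧
        x ∈ Subgroup.zpowers (k * g * k⁻¹)) →
      (∃ k : DihedralGroup 6, x ∈ Subgroup.zpowers (k * σ * k⁻¹)) →
      x = 1 := by
  intro ρ σ g₁ g₂ g₃ g₄
  refine ⟨by decide, ?_, by decide, ?_, ?_⟩
  · rw [eq_top_iff]
    intro x _
    have hρ : ρ ∈ Subgroup.closure ({g₁, g₂, g₃, g₄} : Set (DihedralGroup 6)) :=
      Subgroup.subset_closure (by simp [g₄])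
    have hg₂ : g₂ ∈ Subgroup.closure ({g₁, g₂, g₃, g₄} : Set (DihedralGroup 6)) :=
      Subgroup.subset_closure (by simp)
    have hσ : σ ∈ Subgroup.closure ({g₁, g₂, g₃, g₄} : Set (DihedralGroup 6)) := by
      have : σ = ρ⁻¹ * g₂ := by simp [g₂]
      rw [this]; exact mul_mem (inv_mem hρ) hg₂
    have := mem_closure_sr_r x
    exact Subgroup.closure_le (K := Subgroup.closure ({g₁, g₂, g₃, g₄} : Set (DihedralGroup 6)))
      |>.2 (by rintro y (rfl | rfl); exacts [hσ, hρ]) this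
  · rw [eq_top_iff]
    intro x _
    exact Subgroup.closure_mono (by intro y hy; rcases hy with rfl | rfl <;> simp [σ, ρ])
      (mem_closure_sr_r x)
  · rintro x ⟨k, g, hg, hx⟩ ⟨k', hx'⟩
    obtain ⟨n, hn⟩ := pow_fin _ _ hx
    obtain ⟨m, hm⟩ := pow_fin2 _ _ (by rw [show (2:ℕ) = 2 from rfl]; rw [conj_pow]; simp [σ]; decide) hx'
    subst hn
    rcases hg with rfl | rfl | rfl | rfl
    · exact key1 k k' n m hm
    · exact key2 k k' n m hm
    · exact key3 k k' n m hm
    · exact key4 k k' n m hm
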